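/- Let R : X → ℝ with R(x) > 0 for all x ∈ X. Suppose the triple (P_F°, P_B°, Z°) with Z° > 0 satisfies trajectory balance for R, where P_B° is the uniform backward policy, and suppose (P_F, P_B, Z) with Z > 0 is any triple satisfying trajectory balance for R. Then H[P_F] ≤ H[P_F°]; that is, the Markovian flow determined by the uniform backward policy has maximal entropy among all Markovian flows whose terminating distribution matches the reward R. -/

import Mathlib

open scoped BigOperators Classical

/-- The GFlowNet state space `S = {0,1,⊘}^D`: functions from `Fin D` to `Option Bool`,
with `none` denoting the unspecified entry `⊘`. -/
abbrev GState (D : ℕ) := Fin D → Option Bool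

/-- The initial state `s₀`, with all entries `⊘`. -/
def initState (D : ℕ) : GState D := fun _ => none

/-- `s'` is a child of `s` (edge `s → s'` of the DAG `G`): `s'` is obtained from `s`
by changing exactly one `⊘`-entry of `s` to `0` or `1`. -/
def IsChild {D : ℕ} (s s' : GState D) : Prop :=
  ∃ (i : Fin D) (b : Bool), s i = none ∧ s' = Function.update s i (some b)

/-- Terminal states: no `⊘`-entry. -/
def IsTerminal {D : ℕ} (s : GState D) : Prop := ∀ i, s i ≠ none

/-- The embedding of `X = {0,1}^D` as the set of terminal states. -/
def ofX {D : ℕ} (x : Fin D → Bool) : GState D := fun i => some (x i)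

/-- `|s|`: the number of non-`⊘` entries of `s`. -/
def numAssigned {D : ℕ} (s : GState D) : ℕ :=
  (Finset.univ.filter fun i => s i ≠ none).card

/-- A complete trajectory `τ = (t₀ → t₁ → ⋯ → t_n)`, encoded as the list of its states:
it starts at `s₀`, each consecutive pair is an edge of `G`, and it ends at a terminal state. -/
def IsCompleteTraj {D : ℕ} (l : List (GState D)) : Prop :=
  l.head? = some (initState D) ∧ l.Chain' IsChild ∧
    ∃ s, l.getLast? = some s ∧ IsTerminal s

/-- The trajectory `l` ends at the terminal state corresponding to `x ∈ X`. -/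
def EndsAt {D : ℕ} (l : List (GState D)) (x : Fin D → Bool) : Prop :=
  l.getLast? = some (ofX x)

/-- `PF` is a forward policy: for every nonterminal `s`, `PF s ·` is a probability
distribution supported on the children of `s` (`PF s s'` is `P_F(s'|s)`). -/
def IsForwardPolicy {D : ℕ} (PF : GState D → GState D → ℝ) : Prop :=
  ∀ s : GState D, ¬ IsTerminal s →
    (∀ s', 0 ≤ PF s s') ∧ (∀ s', PF s s' ≠ 0 → IsChild s s') ∧
    (∑ s' : GState D, PF s s' = 1)

/-- `PB` is a backward policy: for every noninitial `s'`, `PB s' ·` is a probability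
distribution supported on the parents of `s'` (`PB s' s` is `P_B(s|s')`). -/
def IsBackwardPolicy {D : ℕ} (PB : GState D → GState D → ℝ) : Prop :=
  ∀ s' : GState D, s' ≠ initState D →
    (∀ s, 0 ≤ PB s' s) ∧ (∀ s, PB s' s ≠ 0 → IsChild s s') ∧
    (∑ s : GState D, PB s' s = 1)

/-- `P_F(τ) = ∏_{i<n} P_F(t_{i+1}|t_i)` along a trajectory. -/
def trajPF {D : ℕ} (PF : GState D → GState D → ℝ) (l : List (GState D)) : ℝ :=
  ((l.zip l.tail).map fun p => PF p.1 p.2).prod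

/-- `P_B(τ|x) = ∏_{i<n} P_B(t_i|t_{i+1})` along a trajectory. -/
def trajPB {D : ℕ} (PB : GState D → GState D → ℝ) (l : List (GState D)) : ℝ :=
  ((l.zip l.tail).map fun p => PB p.2 p.1).prod

/-- Trajectory balance for reward `R`: `Z·P_F(τ) = R(x)·P_B(τ|x)` for every complete
trajectory `τ` ending at `x`. -/
def TrajBalance {D : ℕ} (PF PB : GState D → GState D → ℝ) (Z : ℝ)
    (R : (Fin D → Bool) → ℝ) : Prop :=
  ∀ (l : List (GState D)) (x : Fin D → Bool),
    IsCompleteTraj l → EndsAt l x → Z * trajPF PF l = R x * trajPB PB l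

/-- The terminating probability `P_T(x)`: the sum of `P_F(τ)` over all complete
trajectories ending at `x`. -/
noncomputable def PT {D : ℕ} (PF : GState D → GState D → ℝ) (x : Fin D → Bool) : ℝ :=
  ∑ᶠ l ∈ {l : List (GState D) | IsCompleteTraj l ∧ EndsAt l x}, trajPF PF l

/-- A path in `G` from `s` to `t`, encoded as the list of its states. -/
def IsPath {D : ℕ} (l : List (GState D)) (s t : GState D) : Prop :=
  l.Chain' IsChild ∧ l.head? = some s ∧ l.getLast? = some t
/-- The state flow `F(s)`: sum of `F(τ) = Z·P_F(τ)` over complete trajectories through `s`. -/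
noncomputable def stateFlow {D : ℕ} (PF : GState D → GState D → ℝ) (Z : ℝ)
    (s : GState D) : ℝ :=
  ∑ᶠ l ∈ {l : List (GState D) | IsCompleteTraj l ∧ s ∈ l}, Z * trajPF PF l

/-- The edge flow `F(s→s')`: sum of `F(τ) = Z·P_F(τ)` over complete trajectories
containing the edge `s → s'`. -/
noncomputable def edgeFlow {D : ℕ} (PF : GState D → GState D → ℝ) (Z : ℝ)
    (s s' : GState D) : ℝ :=
  ∑ᶠ l ∈ {l : List (GState D) | IsCompleteTraj l ∧ (s, s') ∈ l.zip l.tail}, Z * trajPF PF l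

/-- The Shannon entropy `H[P_F(·|s)]` of the forward policy at `s` (natural log,
with `0·log 0 = 0`). -/
noncomputable def stepEntropyF {D : ℕ} (PF : GState D → GState D → ℝ) (s : GState D) : ℝ :=
  ∑ s' : GState D, Real.negMulLog (PF s s')

/-- The entropy of the flow determined by `P_F`:
`H[P_F] = Σ_τ P_F(τ) · Σ_{i<n} H[P_F(·|t_i)]`. -/
noncomputable def flowEntropy {D : ℕ} (PF : GState D → GState D → ℝ) : ℝ :=
  ∑ᶠ l ∈ {l : List (GState D) | IsCompleteTraj l},
    trajPF PF l * (l.dropLast.map (stepEntropyF PF)).sum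

/-- The uniform backward policy `P_B°(s|s') = 1/|s'|` for each parent `s` of `s'`. -/
noncomputable def uniformBackward (D : ℕ) : GState D → GState D → ℝ :=
  fun s' s => if IsChild s s' then 1 / (numAssigned s' : ℝ) else 0

section Aux

open Real List Finset

variable {D : ℕ}

lemma numAssigned_le (s : GState D) : numAssigned s ≤ D := by
  classical
  have := Finset.card_filter_le (Finset.univ : Finset (Fin D)) (fun i => s i ≠ none)
  simpa [numAssigned] using this

lemma isChild_numAssigned {s s' : GState D} (h : IsChild s s') :
    numAssigned s' = numAssigned s + 1 := by
  classical
  obtain ⟨i, b, hi, rfl⟩ := h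
  unfold numAssigned
  have hins : (Finset.univ.filter fun j => Function.update s i (some b) j ≠ none)
      = insert i (Finset.univ.filter fun j => s j ≠ none) := by
    ext j
    by_cases hj : j = i
    · subst hj; simp [Function.update_self]
    · simp [Function.update_of_ne hj, hj]
  rw [hins, Finset.card_insert_of_notMem (by simp [hi])]

lemma isChild_not_terminal {s s' : GState D} (h : IsChild s s') : ¬ IsTerminal s := by
  obtain ⟨i, b, hi, _⟩ := h
  exact fun ht => ht i hi

lemma isTerminal_iff {s : GState D} : IsTerminal s ↔ numAssigned s = D := by
  classical
  constructor
  · intro h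
    unfold numAssigned
    rw [Finset.filter_true_of_mem (fun i _ => h i)]
    simp
  · intro h i
    unfold numAssigned at h
    have : (Finset.univ.filter fun i => s i ≠ none) = Finset.univ := by
      apply Finset.eq_univ_of_card
      simpa using h
    have hi : i ∈ (Finset.univ.filter fun i => s i ≠ none) := by
      rw [this]; exact Finset.mem_univ i
    exact (Finset.mem_filter.mp hi).2

lemma eq_initState_iff {s : GState D} : s = initState D ↔ numAssigned s = 0 := by
  classical
  constructor
  · rintro rfl; simp [numAssigned, initState]
  · intro h
    funext i
    have hemp : (Finset.univ.filter fun i => s i ≠ none) = ∅ := Finset.card_eq_zero.mp h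
    by_contra hne
    have : i ∈ (Finset.univ.filter fun i => s i ≠ none) := by
      simp only [Finset.mem_filter, Finset.mem_univ, true_and]
      intro hcon
      exact hne (by rw [hcon]; rfl)
    rw [hemp] at this
    exact absurd this (Finset.notMem_empty i)

lemma chain'_zip {l : List (GState D)} (h : l.Chain' IsChild) :
    ∀ p ∈ l.zip l.tail, IsChild p.1 p.2 := by
  induction l with
  | nil => simp
  | cons a t ih =>
    cases t with
    | nil => simp
    | cons b t' =>
      simp only [List.Chain', List.isChain_cons_cons] at h
      intro p hp
      simp only [List.tail_cons, List.zip_cons_cons, List.mem_cons] at hp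
      rcases hp with rfl | hp
      · exact h.1
      · exact ih h.2 p (by simpa using hp)

lemma chain'_head_getLast : ∀ (l : List (GState D)), l.Chain' IsChild →
    ∀ s t, l.head? = some s → l.getLast? = some t →
    numAssigned t + 1 = numAssigned s + l.length := by
  intro l
  induction l with
  | nil => simp
  | cons a t ih =>
    cases t with
    | nil =>
      intro _ s u hs hu
      simp only [List.head?_cons, Option.some.injEq] at hs
      simp only [List.getLast?_singleton, Option.some.injEq] at hu
      subst hs; subst hu; simp
    | cons b t' =>
      intro h s u hs hu
      simp only [List.Chain', List.isChain_cons_cons] at h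
      simp only [List.head?_cons, Option.some.injEq] at hs
      subst hs
      rw [List.getLast?_cons_cons] at hu
      have hih := ih h.2 b u rfl hu
      have hb := isChild_numAssigned h.1
      simp only [List.length_cons] at hih ⊢
      omega

lemma chain'_length_le {l : List (GState D)} (h : l.Chain' IsChild) : l.length ≤ D + 1 := by
  cases l with
  | nil => simp
  | cons a t =>
    have hne : (a :: t) ≠ ([] : List (GState D)) := by simp
    obtain ⟨u, hu⟩ : ∃ u, (a :: t).getLast? = some u :=
      Option.isSome_iff_exists.mp (List.getLast?_isSome.mpr hne)
    have h1 := chain'_head_getLast _ h a u rfl hu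
    have h2 := numAssigned_le u
    omega

/-- Forward paths from `s` to a terminal state. -/
def FwdSet (s : GState D) : Set (List (GState D)) :=
  {l | l.Chain' IsChild ∧ l.head? = some s ∧ ∃ t, l.getLast? = some t ∧ IsTerminal t}

/-- Paths from the initial state to `s`. -/
def BwdSet (s : GState D) : Set (List (GState D)) :=
  {l | l.Chain' IsChild ∧ l.head? = some (initState D) ∧ l.getLast? = some s}

lemma fwdSet_finite (s : GState D) : (FwdSet s).Finite :=
  (List.finite_length_le (GState D) (D + 1)).subset fun _ hl => chain'_length_le hl.1

lemma bwdSet_finite (s : GState D) : (BwdSet s).Finite :=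
  (List.finite_length_le (GState D) (D + 1)).subset fun _ hl => chain'_length_le hl.1

noncomputable def FwdF (s : GState D) : Finset (List (GState D)) := (fwdSet_finite s).toFinset

noncomputable def BwdF (s : GState D) : Finset (List (GState D)) := (bwdSet_finite s).toFinset

lemma mem_FwdF {s : GState D} {l : List (GState D)} :
    l ∈ FwdF s ↔ l.Chain' IsChild ∧ l.head? = some s ∧
      ∃ t, l.getLast? = some t ∧ IsTerminal t := by
  simp [FwdF, Set.Finite.mem_toFinset, FwdSet]

lemma mem_BwdF {s : GState D} {l : List (GState D)} :
    l ∈ BwdF s ↔ l.Chain' IsChild ∧ l.head? = some (initState D) ∧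
      l.getLast? = some s := by
  simp [BwdF, Set.Finite.mem_toFinset, BwdSet]

lemma FwdF_terminal {s : GState D} (hs : IsTerminal s) : FwdF s = {[s]} := by
  ext l
  simp only [mem_FwdF, Finset.mem_singleton]
  constructor
  · rintro ⟨hc, hh, t, hl, ht⟩
    cases l with
    | nil => simp at hh
    | cons a t' =>
      simp only [List.head?_cons, Option.some.injEq] at hh
      subst hh
      cases t' with
      | nil => rfl
      | cons b t'' =>
        simp only [List.Chain', List.isChain_cons_cons] at hc
        exact absurd hs (isChild_not_terminal hc.1)
  · rintro rfl
    exact ⟨List.isChain_singleton s, rfl, s, by simp, hs⟩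

lemma BwdF_init : BwdF (initState D) = {[initState D]} := by
  ext l
  simp only [mem_BwdF, Finset.mem_singleton]
  constructor
  · rintro ⟨hc, hh, hl⟩
    cases l with
    | nil => simp at hh
    | cons a t =>
      simp only [List.head?_cons, Option.some.injEq] at hh
      subst hh
      have hlen := chain'_head_getLast _ hc _ _ rfl hl
      have h0 : numAssigned (initState D) = 0 := eq_initState_iff.mp rfl
      rw [h0] at hlen
      have ht : t = [] := by
        have : (initState D :: t).length = 1 := by omega
        simpa using this
      subst ht; rfl
  · rintro rfl
    exact ⟨List.isChain_singleton _, rfl, by simp⟩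

lemma getLast?_cons_of_ne_nil {α : Type*} {a : α} {l : List α} (h : l ≠ []) :
    (a :: l).getLast? = l.getLast? := by
  cases l with
  | nil => exact absurd rfl h
  | cons b t => exact List.getLast?_cons_cons

lemma FwdF_eq_biUnion {s : GState D} (hs : ¬ IsTerminal s) :
    FwdF s = (Finset.univ.filter fun s' => IsChild s s').biUnion
      (fun s' => (FwdF s').image (List.cons s)) := by
  classical
  ext l
  simp only [Finset.mem_biUnion, Finset.mem_filter, Finset.mem_univ, true_and,
    Finset.mem_image]
  constructor
  · intro hl
    obtain ⟨hc, hh, t, hlast, ht⟩ := mem_FwdF.mp hl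
    cases l with
    | nil => simp at hh
    | cons a t' =>
      simp only [List.head?_cons, Option.some.injEq] at hh
      subst hh
      cases t' with
      | nil =>
        simp only [List.getLast?_singleton, Option.some.injEq] at hlast
        subst hlast
        exact absurd ht hs
      | cons b t'' =>
        simp only [List.Chain', List.isChain_cons_cons] at hc
        refine ⟨b, hc.1, b :: t'', ?_, rfl⟩
        rw [List.getLast?_cons_cons] at hlast
        exact mem_FwdF.mpr ⟨hc.2, rfl, t, hlast, ht⟩
  · rintro ⟨s', hch, l', hl', rfl⟩
    obtain ⟨hc, hh, t, hlast, ht⟩ := mem_FwdF.mp hl'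
    have hne : l' ≠ [] := by rintro rfl; simp at hh
    refine mem_FwdF.mpr ⟨?_, rfl, t, ?_, ht⟩
    · simp only [List.Chain', List.isChain_cons]
      exact ⟨fun y hy => by rw [hh] at hy; cases hy; exact hch, hc⟩
    · rw [_root_.getLast?_cons_of_ne_nil hne]; exact hlast

lemma sum_FwdF_nonterminal {s : GState D} (hs : ¬ IsTerminal s)
    (f : List (GState D) → ℝ) :
    ∑ l ∈ FwdF s, f l
      = ∑ s' ∈ Finset.univ.filter (fun s' => IsChild s s'),
          ∑ l' ∈ FwdF s', f (s :: l') := by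
  classical
  rw [FwdF_eq_biUnion hs, Finset.sum_biUnion]
  · refine Finset.sum_congr rfl fun s' _ => ?_
    rw [Finset.sum_image]
    intro a _ b _ hab
    exact List.tail_eq_of_cons_eq hab
  · intro x hx y hy hxy
    simp only [Function.onFun]
    rw [Finset.disjoint_left]
    intro l hlx hly
    apply hxy
    simp only [Finset.mem_image] at hlx hly
    obtain ⟨lx, hlxm, hlxe⟩ := hlx
    obtain ⟨ly, hlym, hlye⟩ := hly
    have hxy' : lx = ly := List.tail_eq_of_cons_eq (hlxe.trans hlye.symm)
    subst hxy'
    have h1 := (mem_FwdF.mp hlxm).2.1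
    have h2 := (mem_FwdF.mp hlym).2.1
    rw [h1] at h2
    exact Option.some.inj h2

lemma BwdF_eq_biUnion {s : GState D} (hs : s ≠ initState D) :
    BwdF s = (Finset.univ.filter fun p => IsChild p s).biUnion
      (fun p => (BwdF p).image (fun l => l ++ [s])) := by
  classical
  ext l
  simp only [Finset.mem_biUnion, Finset.mem_filter, Finset.mem_univ, true_and,
    Finset.mem_image]
  constructor
  · intro hl
    obtain ⟨hc, hh, hlast⟩ := mem_BwdF.mp hl
    have hne : l ≠ [] := by rintro rfl; simp at hh
    have hlast' : l.getLast hne = s := by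
      rw [List.getLast?_eq_getLast hne] at hlast
      exact Option.some.inj hlast
    have hdrop : l.dropLast ++ [s] = l := by
      conv_rhs => rw [← List.dropLast_append_getLast hne]
      rw [hlast']
    have hdne : l.dropLast ≠ [] := by
      intro hd
      rw [hd, List.nil_append] at hdrop
      rw [← hdrop] at hh
      simp only [List.head?_cons, Option.some.injEq] at hh
      exact hs hh
    obtain ⟨p, hp⟩ : ∃ p, l.dropLast.getLast? = some p :=
      Option.isSome_iff_exists.mp (List.getLast?_isSome.mpr hdne)
    have hcsplit : l.dropLast.Chain' IsChild ∧ IsChild p s := by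
      rw [← hdrop] at hc
      simp only [List.Chain', List.isChain_append] at hc
      refine ⟨hc.1, ?_⟩
      exact hc.2.2 p hp s rfl
    have hhd : l.dropLast.head? = some (initState D) := by
      rw [← hdrop, List.head?_append] at hh
      cases he : l.dropLast.head? with
      | none => exact absurd (List.head?_eq_none_iff.mp he) hdne
      | some a =>
        rw [he] at hh
        simpa using hh
    exact ⟨p, hcsplit.2, l.dropLast, mem_BwdF.mpr ⟨hcsplit.1, hhd, hp⟩, hdrop⟩
  · rintro ⟨p, hch, l', hl', rfl⟩
    obtain ⟨hc, hh, hlast⟩ := mem_BwdF.mp hl'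
    have hne : l' ≠ [] := by rintro rfl; simp at hh
    refine mem_BwdF.mpr ⟨?_, ?_, List.getLast?_concat⟩
    · simp only [List.Chain', List.isChain_append]
      refine ⟨hc, List.isChain_singleton s, fun x hx y hy => ?_⟩
      rw [hlast] at hx
      cases hx
      simp only [List.head?_cons, Option.mem_def, Option.some.injEq] at hy
      subst hy
      exact hch
    · rw [List.head?_append, hh]; rfl
lemma trajPF_singleton (PF : GState D → GState D → ℝ) (a : GState D) :
    trajPF PF [a] = 1 := by simp [trajPF]

lemma trajPB_singleton (PB : GState D → GState D → ℝ) (a : GState D) :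
    trajPB PB [a] = 1 := by simp [trajPB]

lemma trajPF_cons (PF : GState D → GState D → ℝ) (a b : GState D) (t : List (GState D)) :
    trajPF PF (a :: b :: t) = PF a b * trajPF PF (b :: t) := by
  simp [trajPF]

lemma trajPB_cons (PB : GState D → GState D → ℝ) (a b : GState D) (t : List (GState D)) :
    trajPB PB (a :: b :: t) = PB b a * trajPB PB (b :: t) := by
  simp [trajPB]

lemma trajPF_cons' (PF : GState D → GState D → ℝ) {l : List (GState D)} {a b : GState D}
    (h : l.head? = some b) : trajPF PF (a :: l) = PF a b * trajPF PF l := by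
  cases l with
  | nil => simp at h
  | cons c t =>
    simp only [List.head?_cons, Option.some.injEq] at h
    subst h
    exact trajPF_cons PF a c t

lemma trajPB_cons' (PB : GState D → GState D → ℝ) {l : List (GState D)} {a b : GState D}
    (h : l.head? = some b) : trajPB PB (a :: l) = PB b a * trajPB PB l := by
  cases l with
  | nil => simp at h
  | cons c t =>
    simp only [List.head?_cons, Option.some.injEq] at h
    subst h
    exact trajPB_cons PB a c t

lemma trajPB_concat (PB : GState D → GState D → ℝ) :
    ∀ (l : List (GState D)) (h : l ≠ []) (a : GState D),
      trajPB PB (l ++ [a]) = trajPB PB l * PB a (l.getLast h) := by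
  intro l
  induction l with
  | nil => intro h; exact absurd rfl h
  | cons b t ih =>
    intro _ a
    cases t with
    | nil => simp [trajPB]
    | cons c t' =>
      have h1 : (b :: c :: t') ++ [a] = b :: c :: (t' ++ [a]) := rfl
      have h2 : c :: (t' ++ [a]) = (c :: t') ++ [a] := rfl
      rw [h1, trajPB_cons PB b c (t' ++ [a]), h2, ih (by simp) a,
        trajPB_cons PB b c t', List.getLast_cons (by simp : (c :: t') ≠ [])]
      ring

lemma append_right_cancel_aux {α : Type*} {a b c : List α} (h : a ++ c = b ++ c) :
    a = b := by
  have := congrArg List.reverse h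
  simp only [List.reverse_append] at this
  have h2 := List.append_inj_right this (by simp)
  simpa using congrArg List.reverse h2

lemma trajPB_concat' (PB : GState D → GState D → ℝ) {l : List (GState D)} {p : GState D}
    (h : l.getLast? = some p) (a : GState D) :
    trajPB PB (l ++ [a]) = trajPB PB l * PB a p := by
  have hne : l ≠ [] := by rintro rfl; simp at h
  rw [List.getLast?_eq_getLast hne] at h
  have hp : l.getLast hne = p := Option.some.inj h
  rw [trajPB_concat PB l hne a, hp]

lemma trajPF_nonneg {PF : GState D → GState D → ℝ} (hPF : IsForwardPolicy PF)
    {l : List (GState D)} (h : l.Chain' IsChild) : 0 ≤ trajPF PF l := by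
  apply List.prod_nonneg
  intro x hx
  simp only [List.mem_map] at hx
  obtain ⟨p, hp, rfl⟩ := hx
  have hc := chain'_zip h p hp
  exact (hPF p.1 (isChild_not_terminal hc)).1 p.2

lemma sum_PF_children {PF : GState D → GState D → ℝ} (hPF : IsForwardPolicy PF)
    {s : GState D} (hs : ¬ IsTerminal s) :
    ∑ s' ∈ Finset.univ.filter (fun s' => IsChild s s'), PF s s' = 1 := by
  classical
  obtain ⟨h0, hsupp, hsum⟩ := hPF s hs
  rw [Finset.sum_filter_of_ne (fun x _ hx => hsupp x hx)]
  exact hsum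

lemma sum_PB_parents {PB : GState D → GState D → ℝ} (hPB : IsBackwardPolicy PB)
    {s : GState D} (hs : s ≠ initState D) :
    ∑ p ∈ Finset.univ.filter (fun p => IsChild p s), PB s p = 1 := by
  classical
  obtain ⟨h0, hsupp, hsum⟩ := hPB s hs
  rw [Finset.sum_filter_of_ne (fun x _ hx => hsupp x hx)]
  exact hsum

lemma mass_fwd {PF : GState D → GState D → ℝ} (hPF : IsForwardPolicy PF) :
    ∀ (k : ℕ) (s : GState D), numAssigned s + k = D →
      ∑ l ∈ FwdF s, trajPF PF l = 1 := by
  intro k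
  induction k with
  | zero =>
    intro s hk
    have hs : IsTerminal s := isTerminal_iff.mpr (by omega)
    rw [FwdF_terminal hs]
    simp [trajPF_singleton]
  | succ k ih =>
    intro s hk
    have hs : ¬ IsTerminal s := fun h => by rw [isTerminal_iff] at h; omega
    rw [sum_FwdF_nonterminal hs]
    have hinner : ∀ s' ∈ Finset.univ.filter (fun s' => IsChild s s'),
        (∑ l' ∈ FwdF s', trajPF PF (s :: l')) = PF s s' := by
      intro s' hs'
      simp only [Finset.mem_filter, Finset.mem_univ, true_and] at hs'
      have hmass : ∑ l' ∈ FwdF s', trajPF PF l' = 1 :=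
        ih s' (by rw [isChild_numAssigned hs']; omega)
      calc ∑ l' ∈ FwdF s', trajPF PF (s :: l')
          = ∑ l' ∈ FwdF s', PF s s' * trajPF PF l' :=
            Finset.sum_congr rfl fun l' hl' =>
              trajPF_cons' PF (mem_FwdF.mp hl').2.1
        _ = PF s s' := by rw [← Finset.mul_sum, hmass, mul_one]
    rw [Finset.sum_congr rfl hinner]
    exact sum_PF_children hPF hs

lemma sum_BwdF_noninit {s : GState D} (hs : s ≠ initState D)
    (f : List (GState D) → ℝ) :
    ∑ l ∈ BwdF s, f l
      = ∑ p ∈ Finset.univ.filter (fun p => IsChild p s),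
          ∑ l' ∈ BwdF p, f (l' ++ [s]) := by
  classical
  rw [BwdF_eq_biUnion hs, Finset.sum_biUnion]
  · refine Finset.sum_congr rfl fun p _ => ?_
    rw [Finset.sum_image]
    intro a _ b _ hab
    exact append_right_cancel_aux hab
  · intro x hx y hy hxy
    simp only [Function.onFun]
    rw [Finset.disjoint_left]
    intro l hlx hly
    apply hxy
    simp only [Finset.mem_image] at hlx hly
    obtain ⟨lx, hlxm, hlxe⟩ := hlx
    obtain ⟨ly, hlym, hlye⟩ := hly
    have hxy' : lx = ly := append_right_cancel_aux (hlxe.trans hlye.symm)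
    subst hxy'
    have h1 := (mem_BwdF.mp hlxm).2.2
    have h2 := (mem_BwdF.mp hlym).2.2
    rw [h1] at h2
    exact Option.some.inj h2

lemma mass_bwd {PB : GState D → GState D → ℝ} (hPB : IsBackwardPolicy PB) :
    ∀ (k : ℕ) (s : GState D), numAssigned s = k →
      ∑ l ∈ BwdF s, trajPB PB l = 1 := by
  intro k
  induction k with
  | zero =>
    intro s hk
    have hs : s = initState D := eq_initState_iff.mpr hk
    subst hs
    rw [BwdF_init]
    simp [trajPB_singleton]
  | succ k ih =>
    intro s hk
    have hs : s ≠ initState D := by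
      intro h
      have := eq_initState_iff.mp h
      omega
    rw [sum_BwdF_noninit hs]
    have hinner : ∀ p ∈ Finset.univ.filter (fun p => IsChild p s),
        (∑ l' ∈ BwdF p, trajPB PB (l' ++ [s])) = PB s p := by
      intro p hp
      simp only [Finset.mem_filter, Finset.mem_univ, true_and] at hp
      have hmass : ∑ l' ∈ BwdF p, trajPB PB l' = 1 := by
        apply ih p
        have := isChild_numAssigned hp
        omega
      calc ∑ l' ∈ BwdF p, trajPB PB (l' ++ [s])
          = ∑ l' ∈ BwdF p, trajPB PB l' * PB s p :=
            Finset.sum_congr rfl fun l' hl' =>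
              trajPB_concat' PB (mem_BwdF.mp hl').2.2 s
        _ = PB s p := by rw [← Finset.sum_mul, hmass, one_mul]
    rw [Finset.sum_congr rfl hinner]
    exact sum_PB_parents hPB hs
lemma entropy_chain {PF : GState D → GState D → ℝ} (hPF : IsForwardPolicy PF) :
    ∀ (k : ℕ) (s : GState D), numAssigned s + k = D →
      ∑ l ∈ FwdF s, trajPF PF l * (l.dropLast.map (stepEntropyF PF)).sum
        = ∑ l ∈ FwdF s, Real.negMulLog (trajPF PF l) := by
  intro k
  induction k with
  | zero =>
    intro s hk
    have hs : IsTerminal s := isTerminal_iff.mpr (by omega)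
    rw [FwdF_terminal hs]
    simp [trajPF_singleton]
  | succ k ih =>
    intro s hk
    have hs : ¬ IsTerminal s := fun h => by rw [isTerminal_iff] at h; omega
    rw [sum_FwdF_nonterminal hs, sum_FwdF_nonterminal hs]
    have hLHS : ∀ s' ∈ Finset.univ.filter (fun s' => IsChild s s'),
        (∑ l' ∈ FwdF s', trajPF PF (s :: l') * ((s :: l').dropLast.map (stepEntropyF PF)).sum)
        = PF s s' * stepEntropyF PF s
          + PF s s' * ∑ l' ∈ FwdF s', Real.negMulLog (trajPF PF l') := by
      intro s' hs'
      simp only [Finset.mem_filter, Finset.mem_univ, true_and] at hs'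
      have hna : numAssigned s' + k = D := by rw [isChild_numAssigned hs']; omega
      have hmass : ∑ l' ∈ FwdF s', trajPF PF l' = 1 := mass_fwd hPF k s' hna
      have hstep : ∀ l' ∈ FwdF s',
          trajPF PF (s :: l') * ((s :: l').dropLast.map (stepEntropyF PF)).sum
          = PF s s' * (trajPF PF l' * stepEntropyF PF s
              + trajPF PF l' * (l'.dropLast.map (stepEntropyF PF)).sum) := by
        intro l' hl'
        obtain ⟨hc, hh, _⟩ := mem_FwdF.mp hl'
        have hne : l' ≠ [] := by rintro rfl; simp at hh
        rw [trajPF_cons' PF hh, List.dropLast_cons_of_ne_nil hne, List.map_cons,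
          List.sum_cons]
        ring
      rw [Finset.sum_congr rfl hstep, ← Finset.mul_sum, Finset.sum_add_distrib,
        ← Finset.sum_mul, hmass, one_mul, ← ih s' hna, mul_add]
    have hRHS : ∀ s' ∈ Finset.univ.filter (fun s' => IsChild s s'),
        (∑ l' ∈ FwdF s', Real.negMulLog (trajPF PF (s :: l')))
        = Real.negMulLog (PF s s')
          + PF s s' * ∑ l' ∈ FwdF s', Real.negMulLog (trajPF PF l') := by
      intro s' hs'
      simp only [Finset.mem_filter, Finset.mem_univ, true_and] at hs'
      have hna : numAssigned s' + k = D := by rw [isChild_numAssigned hs']; omega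
      have hmass : ∑ l' ∈ FwdF s', trajPF PF l' = 1 := mass_fwd hPF k s' hna
      have hstep : ∀ l' ∈ FwdF s',
          Real.negMulLog (trajPF PF (s :: l'))
          = trajPF PF l' * Real.negMulLog (PF s s')
            + PF s s' * Real.negMulLog (trajPF PF l') := by
        intro l' hl'
        obtain ⟨hc, hh, _⟩ := mem_FwdF.mp hl'
        rw [trajPF_cons' PF hh, Real.negMulLog_mul]
      rw [Finset.sum_congr rfl hstep, Finset.sum_add_distrib, ← Finset.sum_mul,
        ← Finset.mul_sum, hmass, one_mul]
    rw [Finset.sum_congr rfl hLHS, Finset.sum_congr rfl hRHS,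
      Finset.sum_add_distrib, Finset.sum_add_distrib, ← Finset.sum_mul,
      sum_PF_children hPF hs, one_mul]
    congr 1
    unfold stepEntropyF
    rw [Finset.sum_filter_of_ne]
    intro x _ hx
    by_contra hc
    have hzero : PF s x = 0 := by
      by_contra hz
      exact hc ((hPF s hs).2.1 x hz)
    rw [hzero, Real.negMulLog_zero] at hx
    exact hx rfl

lemma card_parents (s' : GState D) :
    (Finset.univ.filter fun s => IsChild s s').card = numAssigned s' := by
  classical
  have himg : (Finset.univ.filter fun s => IsChild s s')
      = (Finset.univ.filter fun i => s' i ≠ none).image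
          (fun i => Function.update s' i none) := by
    ext s
    simp only [Finset.mem_filter, Finset.mem_image, Finset.mem_univ, true_and]
    constructor
    · rintro ⟨i, b, hi, hs'⟩
      refine ⟨i, ?_, ?_⟩
      · rw [hs']; simp [Function.update_self]
      · funext j
        by_cases hj : j = i
        · subst hj; simp [Function.update_self, hi]
        · rw [hs']; simp [Function.update_of_ne hj]
    · rintro ⟨i, hi, rfl⟩
      cases e : s' i with
      | none => exact absurd e hi
      | some b =>
        refine ⟨i, b, by simp [Function.update_self], ?_⟩
        funext j
        by_cases hj : j = i
        · subst hj; simp [Function.update_self, e]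
        · simp [Function.update_of_ne hj]
  rw [himg, Finset.card_image_of_injOn, numAssigned]
  intro i hi j hj hij
  by_contra hne
  simp only at hij
  have hcf := congrFun hij i
  rw [Function.update_self, Function.update_of_ne hne] at hcf
  have hi' : s' i ≠ none := by simpa using hi
  exact hi' hcf.symm

lemma uniform_isBackward : IsBackwardPolicy (uniformBackward D) := by
  classical
  intro s' hs'
  have hpos : 0 < numAssigned s' := by
    rcases Nat.eq_zero_or_pos (numAssigned s') with h | h
    · exact absurd (eq_initState_iff.mpr h) hs'
    · exact h
  refine ⟨fun s => ?_, fun s h => ?_, ?_⟩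
  · unfold uniformBackward
    split
    · positivity
    · exact le_rfl
  · unfold uniformBackward at h
    by_contra hc
    simp [hc] at h
  · unfold uniformBackward
    rw [← Finset.sum_filter, Finset.sum_const, card_parents, nsmul_eq_mul]
    have : (numAssigned s' : ℝ) ≠ 0 := Nat.cast_ne_zero.mpr (by omega)
    field_simp

lemma trajPB_uniform : ∀ (l : List (GState D)), l.Chain' IsChild → ∀ s t,
    l.head? = some s → l.getLast? = some t →
    trajPB (uniformBackward D) l * (Nat.factorial (numAssigned t) : ℝ)
      = (Nat.factorial (numAssigned s) : ℝ) := by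
  intro l
  induction l with
  | nil => simp
  | cons a t ih =>
    cases t with
    | nil =>
      intro _ s u hs hu
      simp only [List.head?_cons, Option.some.injEq] at hs
      simp only [List.getLast?_singleton, Option.some.injEq] at hu
      subst hs; subst hu
      simp [trajPB_singleton]
    | cons b t' =>
      intro h s u hs hu
      simp only [List.Chain', List.isChain_cons_cons] at h
      simp only [List.head?_cons, Option.some.injEq] at hs
      subst hs
      rw [List.getLast?_cons_cons] at hu
      have hih := ih h.2 b u rfl hu
      rw [trajPB_cons]
      have hb : numAssigned b = numAssigned a + 1 := isChild_numAssigned h.1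
      have hub : uniformBackward D b a = 1 / (numAssigned b : ℝ) := by
        unfold uniformBackward
        rw [if_pos h.1]
      rw [hub, mul_assoc, hih, hb, Nat.factorial_succ, Nat.cast_mul]
      have hne : ((numAssigned a : ℝ) + 1) ≠ 0 := by positivity
      push_cast
      field_simp
lemma numAssigned_init : numAssigned (initState D) = 0 := eq_initState_iff.mp rfl

lemma ofX_terminal (x : Fin D → Bool) : IsTerminal (ofX x) := fun i => by simp [ofX]

lemma numAssigned_ofX (x : Fin D → Bool) : numAssigned (ofX x) = D :=
  isTerminal_iff.mp (ofX_terminal x)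

lemma FwdF_init_eq :
    FwdF (initState D)
      = Finset.univ.biUnion (fun x : Fin D → Bool => BwdF (ofX x)) := by
  classical
  ext l
  simp only [Finset.mem_biUnion, Finset.mem_univ, true_and]
  rw [mem_FwdF]
  constructor
  · rintro ⟨hc, hh, t, hl, ht⟩
    refine ⟨fun i => (t i).getD false, mem_BwdF.mpr ⟨hc, hh, ?_⟩⟩
    convert hl using 2
    funext i
    cases e : t i with
    | none => exact absurd e (ht i)
    | some b => simp [ofX, e]
  · rintro ⟨x, hx⟩
    obtain ⟨hc, hh, hl⟩ := mem_BwdF.mp hx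
    exact ⟨hc, hh, ofX x, hl, ofX_terminal x⟩

lemma BwdF_disj :
    Set.PairwiseDisjoint ((Finset.univ : Finset (Fin D → Bool)) : Set (Fin D → Bool))
      (fun x => BwdF (ofX x)) := by
  intro x _ y _ hxy
  simp only [Function.onFun]
  rw [Finset.disjoint_left]
  intro l hlx hly
  apply hxy
  have h1 := (mem_BwdF.mp hlx).2.2
  have h2 := (mem_BwdF.mp hly).2.2
  rw [h1] at h2
  have h3 : ofX x = ofX y := Option.some.inj h2
  funext i
  have := congrFun h3 i
  simpa [ofX] using this

lemma mem_BwdF_complete {x : Fin D → Bool} {l : List (GState D)}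
    (hl : l ∈ BwdF (ofX x)) : IsCompleteTraj l ∧ EndsAt l x := by
  obtain ⟨hc, hh, hlast⟩ := mem_BwdF.mp hl
  exact ⟨⟨hh, hc, ofX x, hlast, ofX_terminal x⟩, hlast⟩

end Aux
/-- Let `R` be positive on `X`. If `(P_F°, P_B°, Z°)` satisfies trajectory
balance for `R` with the uniform backward policy `P_B°`, and `(P_F, P_B, Z)` is any triple
satisfying trajectory balance for `R`, then `H[P_F] ≤ H[P_F°]`: the flow determined by the
uniform backward policy has maximal entropy among all Markovian flows matching the reward. -/
theorem statement5 {D : ℕ} (hD : 1 ≤ D)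
    (R : (Fin D → Bool) → ℝ) (hR : ∀ x, 0 < R x)
    (PF₀ PF PB : GState D → GState D → ℝ) (Z₀ Z : ℝ)
    (hZ₀ : 0 < Z₀) (hZ : 0 < Z)
    (hPF₀ : IsForwardPolicy PF₀)
    (hTB₀ : TrajBalance PF₀ (uniformBackward D) Z₀ R)
    (hPF : IsForwardPolicy PF) (hPB : IsBackwardPolicy PB)
    (hTB : TrajBalance PF PB Z R) :
    flowEntropy PF ≤ flowEntropy PF₀ := by
  classical
  have hset : {l : List (GState D) | IsCompleteTraj l} = ↑(FwdF (initState D)) := by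
    ext l
    simp only [Set.mem_setOf_eq, Finset.mem_coe, mem_FwdF, IsCompleteTraj]
    tauto
  have hflow : ∀ Q : GState D → GState D → ℝ,
      flowEntropy Q = ∑ l ∈ FwdF (initState D),
        trajPF Q l * (l.dropLast.map (stepEntropyF Q)).sum := by
    intro Q
    rw [flowEntropy, hset, finsum_mem_coe_finset]
  have hinit : numAssigned (initState D) + D = D := by rw [numAssigned_init]; omega
  have hEnt : flowEntropy PF
      = ∑ l ∈ FwdF (initState D), Real.negMulLog (trajPF PF l) := by
    rw [hflow PF]; exact entropy_chain hPF D (initState D) hinit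
  have hEnt₀ : flowEntropy PF₀
      = ∑ l ∈ FwdF (initState D), Real.negMulLog (trajPF PF₀ l) := by
    rw [hflow PF₀]; exact entropy_chain hPF₀ D (initState D) hinit
  have hfac0 : (0 : ℝ) < (Nat.factorial D : ℝ) := by
    exact_mod_cast Nat.factorial_pos D
  have hfacne : ((Nat.factorial D : ℝ)) ≠ 0 := ne_of_gt hfac0
  have hPBu : ∀ (x : Fin D → Bool), ∀ l ∈ BwdF (ofX x),
      trajPB (uniformBackward D) l = ((Nat.factorial D : ℝ))⁻¹ := by
    intro x l hl
    obtain ⟨hc, hh, hlast⟩ := mem_BwdF.mp hl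
    have h := trajPB_uniform l hc _ _ hh hlast
    rw [numAssigned_init, numAssigned_ofX, Nat.factorial_zero] at h
    field_simp at h ⊢
    push_cast at h
    linarith
  have hBM : ∀ x : Fin D → Bool, ∑ l ∈ BwdF (ofX x), trajPB PB l = 1 :=
    fun x => mass_bwd hPB _ _ rfl
  have hBMu : ∀ x : Fin D → Bool,
      ∑ l ∈ BwdF (ofX x), trajPB (uniformBackward D) l = 1 :=
    fun x => mass_bwd uniform_isBackward _ _ rfl
  have hcard : ∀ x : Fin D → Bool,
      ((BwdF (ofX x)).card : ℝ) = (Nat.factorial D : ℝ) := by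
    intro x
    have h := hBMu x
    rw [Finset.sum_congr rfl (fun l hl => hPBu x l hl), Finset.sum_const,
      nsmul_eq_mul] at h
    field_simp at h
    exact_mod_cast h
  have hq : ∀ x : Fin D → Bool, ∑ l ∈ BwdF (ofX x), trajPF PF l = R x / Z := by
    intro x
    have hcong : ∀ l ∈ BwdF (ofX x), trajPF PF l = R x / Z * trajPB PB l := by
      intro l hl
      obtain ⟨h1, h2⟩ := mem_BwdF_complete hl
      have h := hTB l x h1 h2
      field_simp
      linarith
    rw [Finset.sum_congr rfl hcong, ← Finset.mul_sum, hBM, mul_one]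
  have hq0 : ∀ x : Fin D → Bool, ∀ l ∈ BwdF (ofX x),
      trajPF PF₀ l = R x / Z₀ * ((Nat.factorial D : ℝ))⁻¹ := by
    intro x l hl
    obtain ⟨h1, h2⟩ := mem_BwdF_complete hl
    have h := hTB₀ l x h1 h2
    rw [hPBu x l hl] at h
    field_simp at h ⊢
    linarith
  have hsum1 : ∑ x : Fin D → Bool, R x / Z = 1 := by
    have hm : ∑ l ∈ FwdF (initState D), trajPF PF l = 1 := mass_fwd hPF D _ hinit
    rw [FwdF_init_eq, Finset.sum_biUnion BwdF_disj] at hm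
    rw [← hm]
    exact Finset.sum_congr rfl fun x _ => (hq x).symm
  have hsum2 : ∑ x : Fin D → Bool, R x / Z₀ = 1 := by
    have hm : ∑ l ∈ FwdF (initState D), trajPF PF₀ l = 1 := mass_fwd hPF₀ D _ hinit
    rw [FwdF_init_eq, Finset.sum_biUnion BwdF_disj] at hm
    rw [← hm]
    refine Finset.sum_congr rfl fun x _ => ?_
    rw [Finset.sum_congr rfl (hq0 x), Finset.sum_const, nsmul_eq_mul, hcard]
    field_simp
  have hZZ : Z = Z₀ := by
    have h1 : (∑ x : Fin D → Bool, R x) = Z := by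
      have h := hsum1
      rw [← Finset.sum_div] at h
      field_simp at h
      linarith
    have h2 : (∑ x : Fin D → Bool, R x) = Z₀ := by
      have h := hsum2
      rw [← Finset.sum_div] at h
      field_simp at h
      linarith
    rw [← h1, ← h2]
  rw [hEnt, hEnt₀, FwdF_init_eq, Finset.sum_biUnion BwdF_disj,
    Finset.sum_biUnion BwdF_disj]
  apply Finset.sum_le_sum
  intro x _
  have hcardR := hcard x
  have hn0 : (0 : ℝ) < ((BwdF (ofX x)).card : ℝ) := by rw [hcardR]; exact hfac0
  have hnne : ((BwdF (ofX x)).card : ℝ) ≠ 0 := ne_of_gt hn0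
  set n : ℝ := ((BwdF (ofX x)).card : ℝ) with hn
  have hRHS : ∑ l ∈ BwdF (ofX x), Real.negMulLog (trajPF PF₀ l)
      = n * Real.negMulLog (R x / Z₀ * n⁻¹) := by
    have hcong : ∀ l ∈ BwdF (ofX x),
        Real.negMulLog (trajPF PF₀ l) = Real.negMulLog (R x / Z₀ * n⁻¹) := by
      intro l hl
      rw [hq0 x l hl, ← hcardR]
    rw [Finset.sum_congr rfl hcong, Finset.sum_const, nsmul_eq_mul]
  have hw : ∑ _l ∈ BwdF (ofX x), n⁻¹ = 1 := by
    rw [Finset.sum_const, nsmul_eq_mul]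
    field_simp
    exact hn.symm
  have hmem : ∀ l ∈ BwdF (ofX x), trajPF PF l ∈ Set.Ici (0 : ℝ) := fun l hl =>
    trajPF_nonneg hPF (mem_BwdF.mp hl).1
  have hjen := Real.concaveOn_negMulLog.le_map_sum
    (fun l _ => by positivity : ∀ l ∈ BwdF (ofX x), (0:ℝ) ≤ n⁻¹) hw hmem
  have hsum : ∑ l ∈ BwdF (ofX x), n⁻¹ • trajPF PF l = R x / Z * n⁻¹ := by
    simp only [smul_eq_mul]
    rw [← Finset.mul_sum, hq x]
    ring
  rw [hRHS]
  calc ∑ l ∈ BwdF (ofX x), Real.negMulLog (trajPF PF l)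
      = n * ∑ l ∈ BwdF (ofX x), n⁻¹ • Real.negMulLog (trajPF PF l) := by
        simp only [smul_eq_mul]
        rw [← Finset.mul_sum, ← mul_assoc, mul_inv_cancel₀ hnne, one_mul]
    _ ≤ n * Real.negMulLog (∑ l ∈ BwdF (ofX x), n⁻¹ • trajPF PF l) :=
        mul_le_mul_of_nonneg_left hjen (le_of_lt hn0)
    _ = n * Real.negMulLog (R x / Z₀ * n⁻¹) := by rw [hsum, hZZ]
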